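/- For 1 ≤ p ≤ q < ∞ and x = (x_j)_{j∈ℤ} a sequence in ℓ^p_q (with the symmetric norm ‖·‖_{ℓ^p_q}), the function x̃(t) := Σ_{j∈ℤ} x_j χ_{[j,j+1)}(t) satisfies ‖x‖_{ℓ^p_q} ≤ ‖x̃‖_{M^p_q(ℝ)} ≤ 3^{1/p−1/q} ‖x‖_{ℓ^p_q}. -/

import Mathlib

open scoped ENNReal BigOperators

/-- Discrete Morrey norm over symmetric index sets `S_{m,N} = {m-N, …, m+N}`. -/
noncomputable def dnorm (p q : ℝ) (x : ℤ → ℝ) : ℝ≥0∞ :=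
  ⨆ (m : ℤ) (N : ℕ), ((2 * N + 1 : ℝ≥0∞) ^ (1 / q - 1 / p)) *
    ENNReal.ofReal ((∑ j ∈ Finset.Icc (m - N) (m + N), |x j| ^ p) ^ (1 / p))

/-- Discrete Morrey norm over arbitrary index intervals `S*_{k,n} = {k, …, k+n}`. -/
noncomputable def dnormStar (p q : ℝ) (x : ℤ → ℝ) : ℝ≥0∞ :=
  ⨆ (k : ℤ) (n : ℕ), ((n + 1 : ℝ≥0∞) ^ (1 / q - 1 / p)) *
    ENNReal.ofReal ((∑ j ∈ Finset.Icc k (k + n), |x j| ^ p) ^ (1 / p))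

/-- Morrey norm on the real line. -/
noncomputable def mnormR (p q : ℝ) (f : ℝ → ℝ) : ℝ≥0∞ :=
  ⨆ (a : ℝ) (r : Set.Ioi (0 : ℝ)),
    ENNReal.ofReal ((2 * r.1) ^ (1 / q - 1 / p) *
      (∫ t in (a - r.1)..(a + r.1), |f t| ^ p) ^ (1 / p))

/-- The step function `x̃(t) = ∑_j x_j χ_{[j,j+1)}(t)`, i.e. `x̃(t) = x ⌊t⌋`. -/
noncomputable def step (x : ℤ → ℝ) : ℝ → ℝ := fun t => x ⌊t⌋

/-- The set `S_n = {1 + 2^v + ⋯ + 2^{(n-1)v} + j·2^{nw} : j = 1, …, 2^{n(v-w)}}`. -/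
def Sn (v w n : ℕ) : Set ℤ :=
  {m | ∃ j : ℕ, 1 ≤ j ∧ j ≤ 2 ^ (n * (v - w)) ∧
    m = ((∑ i ∈ Finset.range n, 2 ^ (i * v) : ℕ) : ℤ) + (j : ℤ) * 2 ^ (n * w)}

/-- The sequence with `x_j = 1` iff `j ∈ {0,1} ∪ ⋃_{n≥1} S_n`, `x_j = 0` otherwise. -/
noncomputable def xseq (v w : ℕ) : ℤ → ℝ :=
  Set.indicator (({0, 1} : Set ℤ) ∪ ⋃ n ∈ Set.Ici 1, Sn v w n) 1

/-- `β_n = 1 + 2^v + ⋯ + 2^{nv}`. -/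
def beta (v n : ℕ) : ℕ := ∑ i ∈ Finset.range (n + 1), 2 ^ (i * v)

open MeasureTheory Set


theorem unitI (x : ℤ → ℝ) (p : ℝ) (j : ℤ) :
    IntervalIntegrable (fun t : ℝ => |x ⌊t⌋| ^ p) volume (j : ℝ) ((j : ℝ) + 1) ∧
    ∫ t in (j : ℝ)..((j : ℝ) + 1), |x ⌊t⌋| ^ p = |x j| ^ p := by
  have hfl : ∀ t ∈ Set.Ioo (j : ℝ) ((j:ℝ)+1), (fun t : ℝ => |x ⌊t⌋| ^ p) t = |x j| ^ p := by
    intro t ht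
    have : ⌊t⌋ = j := by
      rw [Int.floor_eq_iff]
      exact ⟨ht.1.le, by exact_mod_cast ht.2⟩
    simp [this]
  have hIoo : IntegrableOn (fun t : ℝ => |x ⌊t⌋| ^ p) (Set.Ioo (j:ℝ) ((j:ℝ)+1)) volume := by
    refine (integrableOn_congr_fun hfl measurableSet_Ioo).mpr ?_
    exact (integrableOn_const_iff).mpr (Or.inr measure_Ioo_lt_top)
  have hIoc : IntegrableOn (fun t : ℝ => |x ⌊t⌋| ^ p) (Set.Ioc (j:ℝ) ((j:ℝ)+1)) volume :=
    hIoo.congr_set_ae Ioo_ae_eq_Ioc.symm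
  refine ⟨⟨hIoc, by rw [Set.Ioc_eq_empty (by linarith)]; exact integrableOn_empty⟩, ?_⟩
  rw [intervalIntegral.integral_of_le (by linarith), integral_Ioc_eq_integral_Ioo,
    setIntegral_congr_fun measurableSet_Ioo hfl]
  simp [Real.volume_Ioo]

theorem blockI (x : ℤ → ℝ) (p : ℝ) (k : ℤ) : ∀ n : ℕ,
    IntervalIntegrable (fun t : ℝ => |x ⌊t⌋| ^ p) volume (k : ℝ) ((k : ℝ) + (n + 1)) ∧
    ∫ t in (k : ℝ)..((k : ℝ) + (n + 1)), |x ⌊t⌋| ^ p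
      = ∑ j ∈ Finset.Icc k (k + n), |x j| ^ p := by
  intro n
  induction n with
  | zero =>
    have h := unitI x p k
    constructor
    · simpa using h.1
    · have : Finset.Icc k (k + (0:ℕ)) = {k} := by simp
      rw [this]
      simpa using h.2
  | succ n ih =>
    have hu := unitI x p (k + (n+1))
    have e1 : ((k + ((n:ℤ)+1) : ℤ) : ℝ) = (k:ℝ) + ((n:ℝ) + 1) := by push_cast; ring
    have e2 : ((k + ((n:ℤ)+1) : ℤ) : ℝ) + 1 = (k:ℝ) + (((n:ℝ) + 1) + 1) := by push_cast; ring
    have hu1 : IntervalIntegrable (fun t : ℝ => |x ⌊t⌋| ^ p) volume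
        ((k:ℝ) + ((n:ℝ)+1)) ((k:ℝ) + (((n:ℝ)+1) + 1)) := by
      rw [← e1, ← e2]; exact hu.1
    have hint : IntervalIntegrable (fun t : ℝ => |x ⌊t⌋| ^ p) volume (k : ℝ)
        ((k : ℝ) + ((n+1) + 1)) := ih.1.trans hu1
    refine ⟨by rw [show ((k:ℝ) + (((n:ℕ)+1:ℕ) + 1)) = (k:ℝ) + (((n:ℝ)+1)+1) by push_cast; ring]; exact hint, ?_⟩
    have hsplit := intervalIntegral.integral_add_adjacent_intervals ih.1 hu1
    have hIcc : Finset.Icc k (k + ((n:ℤ)+1)) = insert (k + (n+1)) (Finset.Icc k (k + n)) := by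
      ext a; simp [Finset.mem_Icc]; omega
    have hins : ∑ j ∈ Finset.Icc k (k + ((n:ℤ)+1)), |x j| ^ p
        = (∑ j ∈ Finset.Icc k (k + (n:ℤ)), |x j| ^ p) + |x (k + ((n:ℤ)+1))| ^ p := by
      rw [hIcc, Finset.sum_insert (by simp [Finset.mem_Icc])]
      ring
    have hu2 : ∫ t in ((k:ℝ) + ((n:ℝ)+1))..((k:ℝ) + (((n:ℝ)+1)+1)), |x ⌊t⌋| ^ p
        = |x (k + ((n:ℤ)+1))| ^ p := by
      rw [← e1, ← e2]; exact hu.2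
    calc ∫ t in (k : ℝ)..((k : ℝ) + (((n:ℕ)+1:ℕ) + 1)), |x ⌊t⌋| ^ p
        = ∫ t in (k : ℝ)..((k : ℝ) + (((n:ℝ)+1) + 1)), |x ⌊t⌋| ^ p := by
          congr 1; push_cast; ring
      _ = (∫ t in (k : ℝ)..((k:ℝ) + ((n:ℝ)+1)), |x ⌊t⌋| ^ p)
          + ∫ t in ((k:ℝ) + ((n:ℝ)+1))..((k:ℝ) + (((n:ℝ)+1)+1)), |x ⌊t⌋| ^ p := hsplit.symm
      _ = ∑ j ∈ Finset.Icc k (k + ((n:ℕ)+1:ℕ)), |x j| ^ p := by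
          rw [ih.2, hu2]
          rw [show ((((n:ℕ)+1:ℕ)):ℤ) = (n:ℤ)+1 by push_cast; ring, hins]

theorem stmt5 (p q : ℝ) (hp : 1 ≤ p) (hpq : p ≤ q) (x : ℤ → ℝ)
    (hx : dnorm p q x ≠ ⊤) :
    dnorm p q x ≤ mnormR p q (step x) ∧
      mnormR p q (step x) ≤ ENNReal.ofReal ((3 : ℝ) ^ (1 / p - 1 / q)) * dnorm p q x := by
  have hp0 : 0 < p := lt_of_lt_of_le one_pos hp
  have hq0 : 0 < q := lt_of_lt_of_le hp0 hpq
  have hθ : 1 / q - 1 / p ≤ 0 := by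
    have : 1 / q ≤ 1 / p := one_div_le_one_div_of_le hp0 hpq
    linarith
  have hθ' : 0 ≤ 1 / p - 1 / q := by linarith
  have hcast : ∀ N : ℕ, ENNReal.ofReal (2 * (N : ℝ) + 1) = (2 * (N : ℝ≥0∞) + 1) := by
    intro N
    rw [show (2 * (N : ℝ) + 1) = ((2 * N + 1 : ℕ) : ℝ) by push_cast; ring,
      ENNReal.ofReal_natCast]
    push_cast; ring
  have hconv : ∀ (N : ℕ) (s : ℝ), 0 ≤ s →
      ENNReal.ofReal ((2 * (N : ℝ) + 1) ^ (1 / q - 1 / p) * s)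
        = (2 * (N : ℝ≥0∞) + 1) ^ (1 / q - 1 / p) * ENNReal.ofReal s := by
    intro N s hs
    rw [ENNReal.ofReal_mul (Real.rpow_nonneg (by positivity) _),
      ← ENNReal.ofReal_rpow_of_pos (by positivity : (0:ℝ) < 2 * (N : ℝ) + 1), hcast N]
  have hSnn : ∀ (k l : ℤ), 0 ≤ ∑ j ∈ Finset.Icc k l, |x j| ^ p := fun k l =>
    Finset.sum_nonneg fun j _ => Real.rpow_nonneg (abs_nonneg _) p
  have habs : ∀ y : ℝ, (|y| ^ p) ^ (1 / p) = |y| := by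
    intro y
    rw [← Real.rpow_mul (abs_nonneg y), mul_one_div, div_self hp0.ne', Real.rpow_one]
  have hstep : ∀ t : ℝ, |step x t| ^ p = |x ⌊t⌋| ^ p := fun t => rfl
  constructor
  · -- lower bound
    rw [dnorm]
    refine iSup_le fun m => iSup_le fun N => ?_
    have hb := blockI x p (m - N) (2 * N)
    have ea : ((m : ℝ) + 1/2) - ((N : ℝ) + 1/2) = ((m - N : ℤ) : ℝ) := by push_cast; ring
    have eb : ((m : ℝ) + 1/2) + ((N : ℝ) + 1/2) = ((m - N : ℤ) : ℝ) + ((2 * N : ℕ) + 1) := by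
      push_cast; ring
    have hIcc : (m - (N:ℤ)) + ((2 * N : ℕ) : ℤ) = m + N := by push_cast; ring
    have hI : ∫ t in (((m:ℝ) + 1/2) - ((N:ℝ) + 1/2))..(((m:ℝ) + 1/2) + ((N:ℝ) + 1/2)),
        |step x t| ^ p = ∑ j ∈ Finset.Icc (m - N) (m + N), |x j| ^ p := by
      simp only [step]
      rw [ea, eb, hb.2, hIcc]
    have hle : (2 * (N:ℝ≥0∞) + 1) ^ (1 / q - 1 / p) *
        ENNReal.ofReal ((∑ j ∈ Finset.Icc (m - N) (m + N), |x j| ^ p) ^ (1 / p))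
        = ENNReal.ofReal ((2 * ((N:ℝ) + 1/2)) ^ (1 / q - 1 / p) *
          (∫ t in (((m:ℝ) + 1/2) - ((N:ℝ) + 1/2))..(((m:ℝ) + 1/2) + ((N:ℝ) + 1/2)),
            |step x t| ^ p) ^ (1 / p)) := by
      rw [hI, show (2 * ((N:ℝ) + 1/2)) = 2 * (N:ℝ) + 1 by ring,
        hconv N _ (Real.rpow_nonneg (hSnn _ _) _)]
    rw [hle, mnormR]
    exact le_iSup₂ (f := fun (a : ℝ) (r : Set.Ioi (0:ℝ)) =>
        ENNReal.ofReal ((2 * r.1) ^ (1 / q - 1 / p) *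
          (∫ t in (a - r.1)..(a + r.1), |step x t| ^ p) ^ (1 / p)))
      ((m:ℝ) + 1/2) ⟨(N:ℝ) + 1/2, Set.mem_Ioi.mpr (by positivity)⟩
  · -- upper bound
    have h3 : (1 : ℝ≥0∞) ≤ ENNReal.ofReal ((3 : ℝ) ^ (1 / p - 1 / q)) := by
      rw [ENNReal.one_le_ofReal]
      exact Real.one_le_rpow (by norm_num) hθ'
    rw [mnormR]
    refine iSup_le fun a => iSup_le fun rr => ?_
    obtain ⟨r, hr⟩ := rr
    have hr0 : (0:ℝ) < r := hr
    simp only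
    have hab : a - r ≤ a + r := by linarith
    set I := ∫ t in (a - r)..(a + r), |step x t| ^ p with hIdef
    have hInn : 0 ≤ I :=
      intervalIntegral.integral_nonneg hab (fun t _ => Real.rpow_nonneg (abs_nonneg _) _)
    by_cases hsmall : 2 * r ≤ 1
    · -- small radius
      set j0 := ⌊a - r⌋ with hj0
      obtain ⟨m0, hm0⟩ : ∃ m0 : ℤ, |x j0| ^ p ≤ |x m0| ^ p ∧ |x (j0 + 1)| ^ p ≤ |x m0| ^ p := by
        rcases le_total (|x (j0 + 1)|) (|x j0|) with h | h
        · exact ⟨j0, le_refl _, Real.rpow_le_rpow (abs_nonneg _) h hp0.le⟩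
        · exact ⟨j0 + 1, Real.rpow_le_rpow (abs_nonneg _) h hp0.le, le_refl _⟩
      have hfb : ∀ t ∈ Set.Icc (a - r) (a + r), |x ⌊t⌋| ^ p ≤ |x m0| ^ p := by
        intro t ht
        have h1 : j0 ≤ ⌊t⌋ := Int.floor_mono ht.1
        have h2 : ⌊t⌋ ≤ j0 + 1 := by
          have := Int.floor_mono (le_trans ht.2 (by linarith : a + r ≤ (a - r) + 1))
          rwa [Int.floor_add_one] at this
        rcases (by omega : ⌊t⌋ = j0 ∨ ⌊t⌋ = j0 + 1) with h | h
        · rw [h]; exact hm0.1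
        · rw [h]; exact hm0.2
      have hint : IntervalIntegrable (fun t : ℝ => |x ⌊t⌋| ^ p) volume (a - r) (a + r) := by
        refine ((blockI x p j0 1).1).mono_set ?_
        rw [Set.uIcc_of_le hab, Set.uIcc_of_le (by linarith : (j0:ℝ) ≤ (j0:ℝ) + ((1:ℕ) + 1))]
        refine Set.Icc_subset_Icc (Int.floor_le _) ?_
        have := Int.lt_floor_add_one (a - r)
        push_cast
        linarith
      have hle2 : I ≤ 2 * r * |x m0| ^ p := by
        have h1 : I ≤ ∫ _ in (a - r)..(a + r), |x m0| ^ p := by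
          rw [hIdef]
          simp only [step]
          exact intervalIntegral.integral_mono_on hab hint intervalIntegrable_const hfb
        have h2 : (∫ _ in (a - r)..(a + r), |x m0| ^ p) = 2 * r * |x m0| ^ p := by
          rw [intervalIntegral.integral_const, smul_eq_mul]
          ring
        linarith
      have hreal : (2 * r) ^ (1 / q - 1 / p) * I ^ (1 / p) ≤ |x m0| := by
        have h1 : I ^ (1 / p) ≤ (2 * r * |x m0| ^ p) ^ (1 / p) :=
          Real.rpow_le_rpow hInn hle2 (by positivity)
        have h2 : (2 * r * |x m0| ^ p) ^ (1 / p) = (2 * r) ^ (1 / p) * |x m0| := by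
          rw [Real.mul_rpow (by positivity) (Real.rpow_nonneg (abs_nonneg _) _), habs]
        have h3' : (2 * r) ^ (1 / q - 1 / p) * ((2 * r) ^ (1 / p) * |x m0|)
            = (2 * r) ^ (1 / q) * |x m0| := by
          rw [← mul_assoc, ← Real.rpow_add (by positivity)]
          norm_num
        calc (2 * r) ^ (1 / q - 1 / p) * I ^ (1 / p)
            ≤ (2 * r) ^ (1 / q - 1 / p) * ((2 * r) ^ (1 / p) * |x m0|) := by
              rw [← h2]
              exact mul_le_mul_of_nonneg_left h1 (Real.rpow_nonneg (by positivity) _)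
          _ = (2 * r) ^ (1 / q) * |x m0| := h3'
          _ ≤ 1 * |x m0| := mul_le_mul_of_nonneg_right
              (Real.rpow_le_one (by positivity) hsmall (by positivity)) (abs_nonneg _)
          _ = |x m0| := one_mul _
      have hd : ENNReal.ofReal |x m0| ≤ dnorm p q x := by
        have he : (2 * ((0:ℕ):ℝ≥0∞) + 1) ^ (1 / q - 1 / p) *
            ENNReal.ofReal ((∑ j ∈ Finset.Icc (m0 - (0:ℕ)) (m0 + (0:ℕ)), |x j| ^ p) ^ (1 / p))
            = ENNReal.ofReal |x m0| := by
          norm_num [ENNReal.one_rpow]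
          rw [← one_div, habs]
        rw [dnorm, ← he]
        exact le_iSup₂ (f := fun (m : ℤ) (N : ℕ) => (2 * (N:ℝ≥0∞) + 1) ^ (1 / q - 1 / p) *
          ENNReal.ofReal ((∑ j ∈ Finset.Icc (m - N) (m + N), |x j| ^ p) ^ (1 / p))) m0 0
      calc ENNReal.ofReal ((2 * r) ^ (1 / q - 1 / p) * I ^ (1 / p))
          ≤ ENNReal.ofReal |x m0| := ENNReal.ofReal_le_ofReal hreal
        _ ≤ dnorm p q x := hd
        _ ≤ ENNReal.ofReal ((3 : ℝ) ^ (1 / p - 1 / q)) * dnorm p q x :=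
            le_mul_of_one_le_left (zero_le (a := dnorm p q x)) h3
    · -- large radius
      push_neg at hsmall
      set N := ⌈r⌉₊ with hN
      set m := ⌊a⌋ with hm
      have hrN : r ≤ (N:ℝ) := Nat.le_ceil r
      have hNlt : (N:ℝ) < r + 1 := Nat.ceil_lt_add_one hr0.le
      have h6 : 2 * (N:ℝ) + 1 ≤ 6 * r := by
        by_cases hr1 : r ≤ 1
        · have hN1 : N ≤ 1 := by
            rw [hN, Nat.ceil_le]
            exact_mod_cast hr1
          have : (N:ℝ) ≤ 1 := by exact_mod_cast hN1
          linarith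
        · push_neg at hr1
          linarith
      have hb := blockI x p (m - N) (2 * N)
      have hca : ((m - N : ℤ) : ℝ) ≤ a - r := by
        have := Int.floor_le a
        push_cast
        linarith
      have hbd : a + r ≤ ((m - N : ℤ) : ℝ) + ((2 * N : ℕ) + 1) := by
        have := Int.lt_floor_add_one a
        push_cast
        linarith
      have hIS : I ≤ ∑ j ∈ Finset.Icc (m - N) (m + N), |x j| ^ p := by
        have hmono := intervalIntegral.integral_mono_interval hca hab hbd
          (Filter.Eventually.of_forall fun t => Real.rpow_nonneg (abs_nonneg _) _) hb.1
        have hIcc : (m - (N:ℤ)) + ((2 * N : ℕ) : ℤ) = m + N := by push_cast; ring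
        rw [hIdef]
        simp only [step]
        calc ∫ t in (a - r)..(a + r), |x ⌊t⌋| ^ p
            ≤ ∫ t in ((m - N : ℤ) : ℝ)..(((m - N : ℤ) : ℝ) + ((2 * N : ℕ) + 1)),
              |x ⌊t⌋| ^ p := hmono
          _ = ∑ j ∈ Finset.Icc (m - N) (m + N), |x j| ^ p := by rw [hb.2, hIcc]
      set S := ∑ j ∈ Finset.Icc (m - N) (m + N), |x j| ^ p with hSdef
      have hS0 : 0 ≤ S := hSnn _ _
      have key : (2 * r) ^ (1 / q - 1 / p)
          ≤ (3:ℝ) ^ (1 / p - 1 / q) * (2 * (N:ℝ) + 1) ^ (1 / q - 1 / p) := by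
        have h1 : (6 * r) ^ (1 / q - 1 / p) ≤ (2 * (N:ℝ) + 1) ^ (1 / q - 1 / p) :=
          Real.rpow_le_rpow_of_nonpos (by positivity) h6 hθ
        have h2 : (6 * r) ^ (1 / q - 1 / p)
            = (3:ℝ) ^ (1 / q - 1 / p) * (2 * r) ^ (1 / q - 1 / p) := by
          rw [show (6 * r) = 3 * (2 * r) by ring,
            Real.mul_rpow (by norm_num) (by positivity)]
        have h3' : (3:ℝ) ^ (1 / p - 1 / q) * (3:ℝ) ^ (1 / q - 1 / p) = 1 := by
          rw [← Real.rpow_add (by norm_num)]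
          norm_num
        calc (2 * r) ^ (1 / q - 1 / p)
            = ((3:ℝ) ^ (1 / p - 1 / q) * (3:ℝ) ^ (1 / q - 1 / p)) *
              (2 * r) ^ (1 / q - 1 / p) := by rw [h3', one_mul]
          _ = (3:ℝ) ^ (1 / p - 1 / q) * (6 * r) ^ (1 / q - 1 / p) := by
              rw [h2]; ring
          _ ≤ (3:ℝ) ^ (1 / p - 1 / q) * (2 * (N:ℝ) + 1) ^ (1 / q - 1 / p) :=
              mul_le_mul_of_nonneg_left h1 (Real.rpow_nonneg (by norm_num) _)
      have hreal : (2 * r) ^ (1 / q - 1 / p) * I ^ (1 / p)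
          ≤ (3:ℝ) ^ (1 / p - 1 / q) * ((2 * (N:ℝ) + 1) ^ (1 / q - 1 / p) * S ^ (1 / p)) := by
        have h1 : I ^ (1 / p) ≤ S ^ (1 / p) := Real.rpow_le_rpow hInn hIS (by positivity)
        calc (2 * r) ^ (1 / q - 1 / p) * I ^ (1 / p)
            ≤ ((3:ℝ) ^ (1 / p - 1 / q) * (2 * (N:ℝ) + 1) ^ (1 / q - 1 / p)) * S ^ (1 / p) :=
              mul_le_mul key h1 (Real.rpow_nonneg hInn _)
                (by positivity)
          _ = (3:ℝ) ^ (1 / p - 1 / q) * ((2 * (N:ℝ) + 1) ^ (1 / q - 1 / p) * S ^ (1 / p)) := by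
              ring
      calc ENNReal.ofReal ((2 * r) ^ (1 / q - 1 / p) * I ^ (1 / p))
          ≤ ENNReal.ofReal ((3:ℝ) ^ (1 / p - 1 / q) *
              ((2 * (N:ℝ) + 1) ^ (1 / q - 1 / p) * S ^ (1 / p))) :=
            ENNReal.ofReal_le_ofReal hreal
        _ = ENNReal.ofReal ((3:ℝ) ^ (1 / p - 1 / q)) *
            ENNReal.ofReal ((2 * (N:ℝ) + 1) ^ (1 / q - 1 / p) * S ^ (1 / p)) :=
            ENNReal.ofReal_mul (Real.rpow_nonneg (by norm_num) _)
        _ = ENNReal.ofReal ((3:ℝ) ^ (1 / p - 1 / q)) *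
            ((2 * (N:ℝ≥0∞) + 1) ^ (1 / q - 1 / p) * ENNReal.ofReal (S ^ (1 / p))) := by
            rw [hconv N _ (Real.rpow_nonneg hS0 _)]
        _ ≤ ENNReal.ofReal ((3:ℝ) ^ (1 / p - 1 / q)) * dnorm p q x := by
            refine mul_le_mul_right ?_ _
            rw [dnorm]
            exact le_iSup₂ (f := fun (m : ℤ) (N : ℕ) => (2 * (N:ℝ≥0∞) + 1) ^ (1 / q - 1 / p) *
              ENNReal.ofReal ((∑ j ∈ Finset.Icc (m - N) (m + N), |x j| ^ p) ^ (1 / p))) m N
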